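/- Any directed path of minimal length in the quantum Bruhat graph ending at the longest element w₀ consists only of upward edges; consequently d_Γ(u, w₀) = ℓ(w₀) − ℓ(u) for every u ∈ W. -/

import Mathlib

open Finset

noncomputable section

namespace QBG

variable {ι V V' : Type*} [Fintype ι] [AddCommGroup V] [Module ℝ V]
  [AddCommGroup V'] [Module ℝ V']

variable (P : RootPairing ι ℝ V V') [P.IsRootSystem] (f : V →ₗ[ℝ] ℝ)

/-- `k` indexes a positive root (w.r.t. the regular linear functional `f`). -/
def Pos (k : ι) : Prop := 0 < f (P.root k)

/-- `k` indexes a simple root: positive and not a sum of two positive roots. -/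
def IsSimple (k : ι) : Prop := Pos P f k ∧
  ¬ ∃ i j : ι, Pos P f i ∧ Pos P f j ∧ P.root k = P.root i + P.root j

/-- The reflection `s_α` associated to the root indexed by `k`. -/
def refl (k : ι) : V ≃ₗ[ℝ] V := P.reflection k

/-- `l` is a word in simple reflections with product `w`. -/
def Wrd (w : V ≃ₗ[ℝ] V) (l : List ι) : Prop :=
  (∀ i ∈ l, IsSimple P f i) ∧ (l.map (refl P)).prod = w

/-- `w` lies in the Weyl group (generated by simple reflections). -/
def InW (w : V ≃ₗ[ℝ] V) : Prop := ∃ l, Wrd P f w l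

/-- Coxeter length of `w` with respect to the simple reflections. -/
def len (w : V ≃ₗ[ℝ] V) : ℕ := sInf {n | ∃ l, Wrd P f w l ∧ l.length = n}

/-- The pairing `⟨2ρ, α_k^∨⟩` where `ρ` is the half-sum of positive roots. -/
def tworho (k : ι) : ℝ := ∑ i, if 0 < f (P.root i) then P.pairing i k else 0

/-- An upward edge of the quantum Bruhat graph, from `w`, labeled `k`. -/
def UpStep (w : V ≃ₗ[ℝ] V) (k : ι) : Prop :=
  Pos P f k ∧ len P f (w * refl P k) = len P f w + 1

/-- A downward edge of the quantum Bruhat graph, from `w`, labeled `k`. -/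
def DownStep (w : V ≃ₗ[ℝ] V) (k : ι) : Prop :=
  Pos P f k ∧ (len P f (w * refl P k) : ℝ) = (len P f w : ℝ) - tworho P f k + 1

/-- An edge of the quantum Bruhat graph, from `w`, labeled `k`. -/
def Step (w : V ≃ₗ[ℝ] V) (k : ι) : Prop := UpStep P f w k ∨ DownStep P f w k

/-- `ks` is the list of labels of a directed path in the quantum Bruhat graph
starting at `w`. -/
def ValidPath : (V ≃ₗ[ℝ] V) → List ι → Prop
  | _, [] => True
  | w, k :: ks => Step P f w k ∧ ValidPath (w * refl P k) ks

/-- `ks` is the list of labels of an all-downward path starting at `w`. -/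
def DownPath : (V ≃ₗ[ℝ] V) → List ι → Prop
  | _, [] => True
  | w, k :: ks => DownStep P f w k ∧ DownPath (w * refl P k) ks

/-- `ks` is the list of labels of an all-upward path starting at `w`. -/
def UpPath : (V ≃ₗ[ℝ] V) → List ι → Prop
  | _, [] => True
  | w, k :: ks => UpStep P f w k ∧ UpPath (w * refl P k) ks

/-- The endpoint of the path starting at `w` with edge labels `ks`. -/
def pathEnd (w : V ≃ₗ[ℝ] V) (ks : List ι) : V ≃ₗ[ℝ] V := w * (ks.map (refl P)).prod

/-- The distance `d_Γ(u,v)` in the quantum Bruhat graph. -/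
def dist (u v : V ≃ₗ[ℝ] V) : ℕ :=
  sInf {n | ∃ ks, ValidPath P f u ks ∧ pathEnd P u ks = v ∧ ks.length = n}

/-- The all-downward distance `d_↓(w)` from `w` to the identity. -/
def ddown (w : V ≃ₗ[ℝ] V) : ℕ :=
  sInf {n | ∃ ks, DownPath P f w ks ∧ pathEnd P w ks = 1 ∧ ks.length = n}

open Classical in
/-- The pairing of `2ρ` with the weight of the path `(w, ks)`, i.e. the sum of
`⟨2ρ, α^∨⟩` over the downward edges of the path. -/
def downWeight : (V ≃ₗ[ℝ] V) → List ι → ℝ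
  | _, [] => 0
  | w, k :: ks =>
      (if UpStep P f w k then 0 else tworho P f k) + downWeight (w * refl P k) ks

/-- `w` contains `v`: `w = u * v * u'` length-additively. -/
def Contains (w v : V ≃ₗ[ℝ] V) : Prop :=
  ∃ u u', InW P f u ∧ InW P f u' ∧ w = u * v * u' ∧
    len P f w = len P f u + len P f v + len P f u'

/-- `w` is small-height-avoiding: it contains no non-simple reflection `s_β`
with `ℓ(s_β) = ⟨2ρ, β^∨⟩ - 1`. -/
def SmallHeightAvoiding (w : V ≃ₗ[ℝ] V) : Prop :=
  ¬ ∃ k : ι, Pos P f k ∧ ¬ IsSimple P f k ∧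
      (len P f (refl P k) : ℝ) = tworho P f k - 1 ∧ Contains P f w (refl P k)

/-- The root system `P` is reduced. -/
def Reduced : Prop := ∀ i j : ι, P.root i ≠ (2 : ℝ) • P.root j

/-- The linear functional `f` is regular: it vanishes on no root. -/
def Regular : Prop := ∀ i : ι, f (P.root i) ≠ 0



section Aux
set_option linter.unusedSectionVars false
-- chunk 1: basics
lemma mul_apply (u v : V ≃ₗ[ℝ] V) (x : V) : (u * v) x = u (v x) := rfl

lemma refl_mul_refl (k : ι) : refl P k * refl P k = 1 := by
  ext x; simp [mul_apply, refl]

lemma refl_inv (k : ι) : (refl P k)⁻¹ = refl P k := by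
  rw [eq_comm, eq_inv_iff_mul_eq_one, refl_mul_refl]

variable {P f}

lemma Wrd.append {w v : V ≃ₗ[ℝ] V} {l m : List ι} (hw : Wrd P f w l) (hv : Wrd P f v m) :
    Wrd P f (w * v) (l ++ m) := by
  refine ⟨fun i hi => ?_, ?_⟩
  · rcases List.mem_append.1 hi with h | h
    exacts [hw.1 i h, hv.1 i h]
  · rw [List.map_append, List.prod_append, hw.2, hv.2]

lemma Wrd.nil : Wrd P f (1 : V ≃ₗ[ℝ] V) [] := ⟨by simp, rfl⟩

lemma Wrd.singleton {k : ι} (hk : IsSimple P f k) : Wrd P f (refl P k) [k] := by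
  refine ⟨by simpa using hk, by simp⟩

lemma Wrd.reverse {w : V ≃ₗ[ℝ] V} {l : List ι} (hw : Wrd P f w l) :
    Wrd P f w⁻¹ l.reverse := by
  induction l generalizing w with
  | nil => simpa using ⟨by simp, by rw [← hw.2]; simp⟩
  | cons k t ih =>
    have h1 : Wrd P f ((t.map (refl P)).prod) t := ⟨fun i hi => hw.1 i (by simp [hi]), rfl⟩
    have := (ih h1).append (Wrd.singleton (hw.1 k (by simp)))
    rw [List.reverse_cons]
    convert this using 1
    rw [← hw.2]
    simp [mul_inv_rev, refl_inv]

lemma InW.one : InW P f (1 : V ≃ₗ[ℝ] V) := ⟨[], Wrd.nil⟩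

lemma InW.mul {w v : V ≃ₗ[ℝ] V} (hw : InW P f w) (hv : InW P f v) : InW P f (w * v) := by
  obtain ⟨l, hl⟩ := hw; obtain ⟨m, hm⟩ := hv; exact ⟨l ++ m, hl.append hm⟩

lemma InW.inv {w : V ≃ₗ[ℝ] V} (hw : InW P f w) : InW P f w⁻¹ := by
  obtain ⟨l, hl⟩ := hw; exact ⟨l.reverse, hl.reverse⟩

lemma len_le_of_wrd {w : V ≃ₗ[ℝ] V} {l : List ι} (hw : Wrd P f w l) : len P f w ≤ l.length :=
  Nat.sInf_le ⟨l, hw, rfl⟩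

lemma exists_reduced_word {w : V ≃ₗ[ℝ] V} (hw : InW P f w) :
    ∃ l, Wrd P f w l ∧ l.length = len P f w := by
  obtain ⟨l, hl⟩ := hw
  have : len P f w ∈ {n | ∃ l, Wrd P f w l ∧ l.length = n} := Nat.sInf_mem ⟨l.length, l, hl, rfl⟩
  exact this

lemma len_one : len P f (1 : V ≃ₗ[ℝ] V) = 0 :=
  Nat.le_zero.1 (len_le_of_wrd Wrd.nil)

lemma len_mul_le {w v : V ≃ₗ[ℝ] V} (hw : InW P f w) (hv : InW P f v) :
    len P f (w * v) ≤ len P f w + len P f v := by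
  obtain ⟨l, hl, hl'⟩ := exists_reduced_word hw
  obtain ⟨m, hm, hm'⟩ := exists_reduced_word hv
  simpa [hl', hm'] using len_le_of_wrd (hl.append hm)

lemma len_inv {w : V ≃ₗ[ℝ] V} (hw : InW P f w) : len P f w⁻¹ = len P f w := by
  have key : ∀ v : V ≃ₗ[ℝ] V, InW P f v → len P f v⁻¹ ≤ len P f v := by
    intro v hv
    obtain ⟨l, hl, hl'⟩ := exists_reduced_word hv
    simpa [hl'] using len_le_of_wrd hl.reverse
  refine le_antisymm (key w hw) ?_
  simpa using key w⁻¹ hw.inv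

lemma eq_one_of_len_eq_zero {w : V ≃ₗ[ℝ] V} (hw : InW P f w) (h : len P f w = 0) : w = 1 := by
  obtain ⟨l, hl, hl'⟩ := exists_reduced_word hw
  rw [h, List.length_eq_zero_iff] at hl'
  subst hl'
  exact hl.2.symm


variable (P f)
-- chunk 2
/-- Product of reflection permutations along a list. -/
def permL (l : List ι) : Equiv.Perm ι := (l.map (fun k => P.reflectionPerm k)).prod

lemma root_permL (l : List ι) (i : ι) :
    P.root (permL P l i) = (l.map (refl P)).prod (P.root i) := by
  induction l with
  | nil => simp [permL]
  | cons k t ih =>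
    simp only [permL, List.map_cons, List.prod_cons] at *
    rw [Equiv.Perm.mul_apply, P.root_reflectionPerm, ih]
    rfl

variable {P f}

lemma wrd_apply_root {w : V ≃ₗ[ℝ] V} {l : List ι}
    (hw : (l.map (refl P)).prod = w) (i : ι) :
    w (P.root i) = P.root (permL P l i) := by
  rw [root_permL, hw]

/-- negation index -/
def neg (P : RootPairing ι ℝ V V') (k : ι) : ι := P.reflectionPerm k k

lemma root_neg (k : ι) : P.root (neg P k) = - P.root k := by
  simp [neg]

lemma neg_neg' (k : ι) : neg P (neg P k) = k := by
  apply P.root.injective; simp [root_neg]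

lemma neg_inj {i j : ι} (h : neg P i = neg P j) : i = j := by
  apply P.root.injective
  have := congrArg (P.root) h
  rw [root_neg, root_neg] at this
  exact neg_injective this

lemma pairing_reflection_perm_right (k i : ι) :
    P.pairing (P.reflectionPerm k i) k = - P.pairing i k := by
  have h := P.pairing_reflectionPerm k i (P.reflectionPerm k k)
  rw [P.pairing_reflectionPerm_self_right, P.reflectionPerm_self] at h
  linarith

lemma tworho_ge_two (hreg : Regular P f) {k : ι} (hk : Pos P f k) : 2 ≤ tworho P f k := by
  classical
  set σ := P.reflectionPerm k with hσ
  -- split sum over fixed/moved positivity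
  have hinv : ∀ i, σ (σ i) = i := fun i => P.reflectionPerm_self k i
  set g : ι → ℝ := fun i => if 0 < f (P.root i) then P.pairing i k else 0 with hg
  set A : Finset ι := univ.filter (fun i => 0 < f (P.root i) ∧ 0 < f (P.root (σ i))) with hA
  have hmapsA : ∀ i ∈ A, σ i ∈ A := by
    intro i hi
    simp only [hA, mem_filter, mem_univ, true_and] at hi ⊢
    exact ⟨hi.2, by rw [hinv]; exact hi.1⟩
  -- sum over A is zero
  have hsumA : ∑ i ∈ A, P.pairing i k = 0 := by
    have h1 : ∑ i ∈ A, P.pairing i k = ∑ i ∈ A, P.pairing (σ i) k := by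
      refine (Finset.sum_nbij' (fun (i : ι) => σ i) (fun (i : ι) => σ i) ?_ ?_ ?_ ?_ ?_).symm
      · intro a ha; exact hmapsA a ha
      · intro a ha; exact hmapsA a ha
      · intro a _; exact hinv a
      · intro a _; exact hinv a
      · intro a _; rfl
    have h2 : ∑ i ∈ A, P.pairing (σ i) k = - ∑ i ∈ A, P.pairing i k := by
      rw [← Finset.sum_neg_distrib]
      exact Finset.sum_congr rfl fun i _ => pairing_reflection_perm_right k i
    have := h1.trans h2
    linarith
  -- the complement B within positives
  set B : Finset ι := univ.filter (fun i => 0 < f (P.root i) ∧ ¬ 0 < f (P.root (σ i))) with hB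
  have hsplit : tworho P f k = ∑ i ∈ A, P.pairing i k + ∑ i ∈ B, P.pairing i k := by
    rw [tworho]
    rw [← Finset.sum_filter]
    have : univ.filter (fun i => 0 < f (P.root i)) = A ∪ B := by
      ext i
      simp only [hA, hB, mem_filter, mem_union, mem_univ, true_and]
      by_cases h : 0 < f (P.root (σ i)) <;> tauto
    rw [this, Finset.sum_union]
    rw [Finset.disjoint_left]
    intro a haA haB
    simp only [hA, hB, mem_filter, mem_univ, true_and] at haA haB
    exact haB.2 haA.2
  have hk' : (0:ℝ) < f (P.root k) := hk
  have hkB : k ∈ B := by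
    simp only [hB, mem_filter, mem_univ, true_and]
    refine ⟨hk, ?_⟩
    have : P.root (σ k) = - P.root k := by simp [hσ]
    rw [this, map_neg]
    simp only [not_lt]
    linarith
  have hBpos : ∀ i ∈ B, i ≠ k → 0 < P.pairing i k := by
    intro i hi _
    simp only [hB, mem_filter, mem_univ, true_and] at hi
    obtain ⟨hip, hneg⟩ := hi
    have hne : f (P.root (σ i)) ≠ 0 := hreg (σ i)
    have hlt : f (P.root (σ i)) < 0 := lt_of_le_of_ne (not_lt.1 hneg) hne
    have : P.root (σ i) = P.root i - P.pairing i k • P.root k := by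
      rw [hσ, P.root_reflectionPerm, P.reflection_apply_root]
    rw [this, map_sub, map_smul] at hlt
    simp only [smul_eq_mul] at hlt
    by_contra hp
    push_neg at hp
    have : P.pairing i k * f (P.root k) ≤ 0 :=
      mul_nonpos_of_nonpos_of_nonneg hp (le_of_lt hk')
    linarith
  have hsumB : 2 ≤ ∑ i ∈ B, P.pairing i k := by
    have : ∑ i ∈ B, P.pairing i k = P.pairing k k + ∑ i ∈ B.erase k, P.pairing i k := by
      rw [← Finset.add_sum_erase _ _ hkB]
    rw [this, P.pairing_same]
    have : 0 ≤ ∑ i ∈ B.erase k, P.pairing i k := by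
      refine Finset.sum_nonneg fun i hi => ?_
      exact le_of_lt (hBpos i (Finset.mem_of_mem_erase hi) (Finset.ne_of_mem_erase hi))
    linarith
  rw [hsplit, hsumA]
  linarith


-- chunk 3
lemma rootForm_root_pos (i : ι) : 0 < P.RootForm (P.root i) (P.root i) :=
  P.rootForm_pos_of_ne_zero (Submodule.subset_span ⟨i, rfl⟩) (P.ne_zero i)

lemma rootForm_symm (x y : V) : P.RootForm x y = P.RootForm y x := by
  simpa using (LinearMap.isSymm_def.1 P.rootForm_symmetric x y)

/-- key identity: `B(α_i, α_i) * ⟨x, α_i^∨⟩ = 2 * B(α_i, x)` -/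
lemma rootForm_key (i : ι) (x : V) :
    P.RootForm (P.root i) (P.root i) * P.coroot' i x = 2 * P.RootForm (P.root i) x := by
  have h := P.rootForm_self_smul_coroot i
  have h2 := congrArg (fun z => P.toLinearMap x z) h
  simp only [map_smul, smul_eq_mul, map_nsmul, nsmul_eq_mul, Nat.cast_ofNat,
    RootPairing.Polarization_apply, map_sum] at h2
  rw [P.rootForm_apply_apply (P.root i) x]
  exact h2

lemma pairing_key (i j : ι) :
    P.RootForm (P.root i) (P.root i) * P.pairing j i = 2 * P.RootForm (P.root i) (P.root j) := by
  have := rootForm_key (P := P) i (P.root j)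
  rwa [P.root_coroot'_eq_pairing] at this

/-- sign symmetry of pairings -/
lemma pairing_pos_of_pairing_pos {i j : ι} (h : 0 < P.pairing i j) : 0 < P.pairing j i := by
  have h1 := pairing_key (P := P) j i
  have h2 := pairing_key (P := P) i j
  have hBj := rootForm_root_pos (P := P) j
  have hBi := rootForm_root_pos (P := P) i
  have hsym : P.RootForm (P.root j) (P.root i) = P.RootForm (P.root i) (P.root j) :=
    rootForm_symm _ _
  nlinarith

lemma pairing_nonpos_of_pairing_nonpos {i j : ι} (h : P.pairing i j ≤ 0) : P.pairing j i ≤ 0 := by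
  by_contra hc
  push_neg at hc
  exact absurd (pairing_pos_of_pairing_pos hc) (not_lt.2 h)

/-- Cauchy–Schwarz equality ⇒ proportional -/
lemma proportional_of_cs_eq {x y : V}
    (h : P.RootForm x y * P.RootForm x y = P.RootForm x x * P.RootForm y y)
    (hy : 0 < P.RootForm y y) : ∃ c : ℝ, x = c • y := by
  set B := P.RootForm with hB
  have hsym : B y x = B x y := rootForm_symm _ _
  set z := B y y • x - B x y • y with hz
  have hzz : B z z = 0 := by
    simp only [hz, map_sub, map_smul, LinearMap.sub_apply, LinearMap.smul_apply, smul_eq_mul]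
    linear_combination (-(B y y)) * h - (B y y * B x y) * hsym
  have hz0 : z = 0 := by
    refine P.eq_zero_of_mem_rootSpan_of_rootForm_self_eq_zero ?_ hzz
    rw [RootPairing.rootSpan, RootPairing.IsRootSystem.span_root_eq_top]; trivial
  have heq : B y y • x = B x y • y := sub_eq_zero.1 (by rw [← hz]; exact hz0)
  refine ⟨B x y / B y y, ?_⟩
  have hyne : B y y ≠ 0 := ne_of_gt hy
  rw [div_eq_mul_inv, mul_comm, mul_smul, ← heq, ← mul_smul, inv_mul_cancel₀ hyne, one_smul]

/-- Cauchy–Schwarz inequality for the root form. -/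
lemma rootForm_cs (x y : V) :
    P.RootForm x y * P.RootForm x y ≤ P.RootForm x x * P.RootForm y y := by
  set B := P.RootForm with hB
  have hsym : B y x = B x y := rootForm_symm _ _
  rcases eq_or_lt_of_le (P.zero_le_rootForm y) with hy | hy
  · have hy0 : y = 0 := by
      refine P.eq_zero_of_mem_rootSpan_of_rootForm_self_eq_zero ?_ hy.symm
      rw [RootPairing.rootSpan, RootPairing.IsRootSystem.span_root_eq_top]; trivial
    simp [hy0]
  · have hy' : 0 < B y y := hy
    have h0 : 0 ≤ B (B y y • x - B x y • y) (B y y • x - B x y • y) :=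
      P.zero_le_rootForm _
    simp only [map_sub, map_smul, LinearMap.sub_apply, LinearMap.smul_apply, smul_eq_mul] at h0
    rw [hsym] at h0
    nlinarith [h0, hy']

/-- roots positively proportional are equal (crystallographic + reduced) -/
lemma root_eq_of_smul (hP : P.IsCrystallographic) (hred : Reduced P)
    {i k : ι} {c : ℝ} (hc : 0 < c) (h : P.root i = c • P.root k) : P.root i = P.root k := by
  obtain ⟨m, hm⟩ := (P.isValuedIn_iff ℤ).1 hP i k
  rw [algebraMap_int_eq, eq_intCast] at hm
  obtain ⟨n, hn⟩ := (P.isValuedIn_iff ℤ).1 hP k i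
  rw [algebraMap_int_eq, eq_intCast] at hn
  have h1 : P.pairing i k = c * 2 := by
    rw [← P.root_coroot'_eq_pairing, h, map_smul, smul_eq_mul, P.root_coroot'_eq_pairing,
      P.pairing_same]
  have h2 : c * P.pairing k i = 2 := by
    have h3 : P.coroot' i (P.root i) = 2 := by rw [P.root_coroot'_eq_pairing, P.pairing_same]
    rw [h, map_smul, smul_eq_mul, P.root_coroot'_eq_pairing] at h3
    exact h3
  have hmn : (m : ℝ) * n = 4 := by rw [hm, hn]; nlinarith
  have hm0 : (0:ℝ) < m := by rw [hm, h1]; linarith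
  have hn0 : (0:ℝ) < n := by rw [hn]; nlinarith
  have hm0' : 0 < m := by exact_mod_cast hm0
  have hn0' : 0 < n := by exact_mod_cast hn0
  have hmn' : m * n = 4 := by exact_mod_cast hmn
  have hm4 : m ≤ 4 := by nlinarith
  interval_cases m
  · -- m = 1, c = 1/2
    exfalso
    have hc2 : (1:ℝ) = c * 2 := by rw [← h1, ← hm]; norm_num
    refine hred k i ?_
    rw [h, ← mul_smul]
    have : (2:ℝ) * c = 1 := by linarith
    rw [this, one_smul]
  · -- m = 2, c = 1
    have hc2 : (2:ℝ) = c * 2 := by rw [← h1, ← hm]; norm_num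
    have : c = 1 := by linarith
    rw [h, this, one_smul]
  · -- m = 3 impossible
    exfalso; omega
  · -- m = 4, c = 2
    exfalso
    have hc2 : (4:ℝ) = c * 2 := by rw [← h1, ← hm]; norm_num
    have : c = 2 := by linarith
    exact hred i k (by rw [h, this])


-- chunk 4
/-- every positive root is a nonneg combination of simple roots -/
lemma nonneg_comb {i : ι} (hi : Pos P f i) :
    ∃ c : ι → ℝ, (∀ j, 0 ≤ c j) ∧ (∀ j, c j ≠ 0 → IsSimple P f j) ∧
      P.root i = ∑ j, c j • P.root j := by
  classical
  suffices h : ∀ (n : ℕ) (i : ι), (univ.filter fun j => f (P.root j) < f (P.root i)).card = n →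
      Pos P f i → ∃ c : ι → ℝ, (∀ j, 0 ≤ c j) ∧ (∀ j, c j ≠ 0 → IsSimple P f j) ∧
      P.root i = ∑ j, c j • P.root j from h _ i rfl hi
  intro n
  induction n using Nat.strong_induction_on with
  | _ n IH =>
    intro i hcard hi
    by_cases hs : IsSimple P f i
    · refine ⟨fun j => if j = i then 1 else 0, fun j => by positivity, ?_, ?_⟩
      · intro j hj
        by_cases h : j = i
        · subst h; exact hs
        · simp [h] at hj
      · rw [eq_comm]
        simp only [ite_smul, one_smul, zero_smul, Finset.sum_ite_eq', mem_univ, if_true]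
    · rw [IsSimple, not_and_or] at hs
      rcases hs with hs | hs
      · exact absurd hi hs
      · push_neg at hs
        obtain ⟨a, b, ha, hb, hab⟩ := hs
        have hfi : f (P.root i) = f (P.root a) + f (P.root b) := by rw [hab, map_add]
        have ha' : 0 < f (P.root a) := ha
        have hb' : 0 < f (P.root b) := hb
        have hfa : f (P.root a) < f (P.root i) := by linarith
        have hfb : f (P.root b) < f (P.root i) := by linarith
        have hsub : ∀ x : ι, f (P.root x) < f (P.root i) →
            (univ.filter fun j => f (P.root j) < f (P.root x)).card < n := by
          intro x hx
          rw [← hcard]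
          apply Finset.card_lt_card
          constructor
          · intro j hj
            simp only [mem_filter, mem_univ, true_and] at hj ⊢
            linarith
          · intro hcon
            have := hcon (by simp only [mem_filter, mem_univ, true_and]; exact hx)
            simp only [mem_filter, mem_univ, true_and] at this
            exact absurd this (lt_irrefl _)
        obtain ⟨ca, hca0, hcas, hcae⟩ := IH _ (hsub a hfa) a rfl ha
        obtain ⟨cb, hcb0, hcbs, hcbe⟩ := IH _ (hsub b hfb) b rfl hb
        refine ⟨ca + cb, fun j => add_nonneg (hca0 j) (hcb0 j), ?_, ?_⟩
        · intro j hj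
          have h : ca j ≠ 0 ∨ cb j ≠ 0 := by
            by_contra hc
            push_neg at hc
            exact hj (by rw [Pi.add_apply, hc.1, hc.2, add_zero])
          rcases h with h | h
          exacts [hcas j h, hcbs j h]
        · rw [hab, hcae, hcbe, ← Finset.sum_add_distrib]
          exact Finset.sum_congr rfl fun j _ => by rw [Pi.add_apply, add_smul]

/-- distinct simple roots pair non-positively -/
lemma simple_pairing_nonpos (hP : P.IsCrystallographic) (hred : Reduced P)
    (hreg : Regular P f) {i k : ι} (hi : IsSimple P f i) (hk : IsSimple P f k)
    (hik : i ≠ k) : P.pairing i k ≤ 0 := by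
  by_contra hc
  push_neg at hc
  have hq : 0 < P.pairing k i := pairing_pos_of_pairing_pos hc
  obtain ⟨m, hm⟩ := (P.isValuedIn_iff ℤ).1 hP i k
  rw [algebraMap_int_eq, eq_intCast] at hm
  obtain ⟨n, hn⟩ := (P.isValuedIn_iff ℤ).1 hP k i
  rw [algebraMap_int_eq, eq_intCast] at hn
  have hm1 : 1 ≤ m := by
    have : (0:ℝ) < m := by rw [hm]; exact hc
    exact_mod_cast this
  have hn1 : 1 ≤ n := by
    have : (0:ℝ) < n := by rw [hn]; exact hq
    exact_mod_cast this
  -- helper: if `root a - root b` is the root of some index, contradiction with simplicity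
  have key : ∀ a b g : ι, IsSimple P f a → IsSimple P f b → a ≠ b →
      P.root g = P.root a - P.root b → False := by
    intro a b g ha hb hab hg
    rcases lt_or_gt_of_ne (hreg g) with hneg | hpos
    · -- root g negative: root b = root a + root (neg g)
      refine hb.2 ⟨a, neg P g, ha.1, ?_, ?_⟩
      · show 0 < f (P.root (neg P g))
        rw [root_neg, map_neg]; linarith
      · rw [root_neg, hg]; abel
    · -- root g positive: root a = root g + root b
      refine ha.2 ⟨g, b, hpos, hb.1, by rw [hg]; abel⟩
  by_cases hm' : m = 1
  · -- s_k (root i) = root i - root k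
    have : P.root (P.reflectionPerm k i) = P.root i - P.root k := by
      rw [P.root_reflectionPerm, P.reflection_apply_root, ← hm, hm']
      push_cast
      rw [one_smul]
    exact key i k _ hi hk hik this
  by_cases hn' : n = 1
  · have : P.root (P.reflectionPerm i k) = P.root k - P.root i := by
      rw [P.root_reflectionPerm, P.reflection_apply_root, ← hn, hn']
      push_cast
      rw [one_smul]
    exact key k i _ hk hi (Ne.symm hik) this
  -- both pairings ≥ 2, Cauchy-Schwarz forces proportionality
  have hm2 : 2 ≤ m := by omega
  have hn2 : 2 ≤ n := by omega
  have hpq : 4 ≤ P.pairing i k * P.pairing k i := by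
    rw [← hm, ← hn]
    have : (4:ℝ) = 2 * 2 := by norm_num
    rw [this]
    have h2m : (2:ℝ) ≤ m := by exact_mod_cast hm2
    have h2n : (2:ℝ) ≤ n := by exact_mod_cast hn2
    nlinarith
  have k1 := pairing_key (P := P) k i
  have k2 := pairing_key (P := P) i k
  have hsym : P.RootForm (P.root k) (P.root i) = P.RootForm (P.root i) (P.root k) :=
    rootForm_symm _ _
  have hBi := rootForm_root_pos (P := P) i
  have hBk := rootForm_root_pos (P := P) k
  have hcs := rootForm_cs (P := P) (P.root i) (P.root k)
  have e1 : 2 * P.RootForm (P.root i) (P.root k)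
      = P.RootForm (P.root k) (P.root k) * P.pairing i k := by linarith
  have e2 : 2 * P.RootForm (P.root i) (P.root k)
      = P.RootForm (P.root i) (P.root i) * P.pairing k i := by linarith
  have e3 : (2 * P.RootForm (P.root i) (P.root k)) * (2 * P.RootForm (P.root i) (P.root k))
      = (P.RootForm (P.root k) (P.root k) * P.pairing i k)
        * (P.RootForm (P.root i) (P.root i) * P.pairing k i) := by
    linear_combination (2 * P.RootForm (P.root i) (P.root k)) * e2
      + (P.RootForm (P.root i) (P.root i) * P.pairing k i) * e1
  have e4 : P.RootForm (P.root i) (P.root i) * P.RootForm (P.root k) (P.root k)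
      ≤ P.RootForm (P.root i) (P.root k) * P.RootForm (P.root i) (P.root k) := by
    nlinarith [e3, hpq, mul_pos hBi hBk]
  have heq : P.RootForm (P.root i) (P.root k) * P.RootForm (P.root i) (P.root k)
      = P.RootForm (P.root i) (P.root i) * P.RootForm (P.root k) (P.root k) :=
    le_antisymm hcs e4
  obtain ⟨c, hcprop⟩ := proportional_of_cs_eq heq hBk
  have hc0 : 0 < c := by
    have : P.pairing i k = c * 2 := by
      rw [← P.root_coroot'_eq_pairing, hcprop, map_smul, smul_eq_mul,
        P.root_coroot'_eq_pairing, P.pairing_same]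
    nlinarith
  exact hik (P.root.injective (root_eq_of_smul hP hred hc0 hcprop))

/-- H1: a simple reflection keeps all other positive roots positive -/
lemma simple_perm_pos (hP : P.IsCrystallographic) (hred : Reduced P)
    (hreg : Regular P f) {k : ι} (hk : IsSimple P f k) {i : ι} (hi : Pos P f i)
    (hik : i ≠ k) : Pos P f (P.reflectionPerm k i) := by
  classical
  by_contra hcon
  have hfk : 0 < f (P.root k) := hk.1
  have hfi : 0 < f (P.root i) := hi
  have hneg : f (P.root (P.reflectionPerm k i)) < 0 :=
    lt_of_le_of_ne (not_lt.1 hcon) (hreg _)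
  set g := neg P (P.reflectionPerm k i) with hgdef
  have hg : P.root g = P.pairing i k • P.root k - P.root i := by
    rw [hgdef, root_neg, P.root_reflectionPerm, P.reflection_apply_root]
    abel
  have hgpos : Pos P f g := by
    show 0 < f (P.root g)
    rw [hgdef, root_neg, map_neg]
    linarith
  set p := P.pairing i k with hp
  have hsum : P.root i + P.root g = p • P.root k := by rw [hg]; abel
  have hppos : 0 < p := by
    have h1 := congrArg f hsum
    rw [map_add, map_smul, smul_eq_mul] at h1
    have hgf : 0 < f (P.root g) := hgpos
    nlinarith
  obtain ⟨ci, hci0, hcis, hcie⟩ := nonneg_comb (P := P) (f := f) hi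
  obtain ⟨cg, hcg0, hcgs, hcge⟩ := nonneg_comb (P := P) (f := f) hgpos
  set e : ι → ℝ := ci + cg with he
  have hesum : ∑ j, e j • P.root j = p • P.root k := by
    rw [← hsum, hcie, hcge, ← Finset.sum_add_distrib]
    exact Finset.sum_congr rfl fun j _ => by rw [he, Pi.add_apply, add_smul]
  have he0 : ∀ j, 0 ≤ e j := fun j => add_nonneg (hci0 j) (hcg0 j)
  have hes : ∀ j, e j ≠ 0 → IsSimple P f j := by
    intro j hj
    have h : ci j ≠ 0 ∨ cg j ≠ 0 := by
      by_contra hcc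
      push_neg at hcc
      exact hj (by rw [he, Pi.add_apply, hcc.1, hcc.2, add_zero])
    rcases h with h | h
    exacts [hcis j h, hcgs j h]
  -- split off the k term
  have hsplit : ∑ j ∈ univ.erase k, e j • P.root j = (p - e k) • P.root k := by
    have h1 : e k • P.root k + ∑ x ∈ univ.erase k, e x • P.root x = ∑ x : ι, e x • P.root x :=
      Finset.add_sum_erase univ (fun j => e j • P.root j) (mem_univ k)
    rw [sub_smul, ← hesum, ← h1]
    abel
  by_cases hz : ∀ j ∈ univ.erase k, e j = 0
  · -- root i is a positive multiple of root k
    have hcik : ∀ j, j ≠ k → ci j = 0 := by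
      intro j hj
      have := he0 j
      have h2 := hci0 j
      have h3 := hz j (Finset.mem_erase.2 ⟨hj, mem_univ j⟩)
      have : ci j + cg j = 0 := h3
      have := hcg0 j
      linarith
    have hri : P.root i = ci k • P.root k := by
      rw [hcie, ← Finset.add_sum_erase univ (fun j => ci j • P.root j) (mem_univ k)]
      rw [Finset.sum_eq_zero fun j hj => by rw [hcik j (Finset.ne_of_mem_erase hj), zero_smul]]
      rw [add_zero]
    have hcik0 : 0 < ci k := by
      have h1 := congrArg f hri
      rw [map_smul, smul_eq_mul] at h1
      nlinarith
    exact hik (P.root.injective (root_eq_of_smul hP hred hcik0 hri))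
  · push_neg at hz
    obtain ⟨j₀, hj₀mem, hj₀⟩ := hz
    have hj₀simple := hes j₀ hj₀
    have hj₀k : j₀ ≠ k := Finset.ne_of_mem_erase hj₀mem
    have hj₀pos : 0 < e j₀ := lt_of_le_of_ne (he0 j₀) (Ne.symm hj₀)
    -- f of the sum is positive
    have hfs : 0 < (p - e k) * f (P.root k) := by
      have h1 := congrArg f hsplit
      rw [map_sum, map_smul, smul_eq_mul] at h1
      rw [← h1]
      refine Finset.sum_pos' (fun j hj => ?_) ⟨j₀, hj₀mem, ?_⟩
      · rw [map_smul, smul_eq_mul]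
        by_cases hej : e j = 0
        · rw [hej, zero_mul]
        · have : 0 < f (P.root j) := (hes j hej).1
          exact mul_nonneg (he0 j) (le_of_lt this)
      · rw [map_smul, smul_eq_mul]
        have : 0 < f (P.root j₀) := hj₀simple.1
        exact mul_pos hj₀pos this
    have hd0 : 0 < p - e k := by nlinarith
    -- pair with B(·, root k)
    set B := P.RootForm with hB
    have hpair : (p - e k) * B (P.root k) (P.root k)
        = ∑ j ∈ univ.erase k, e j * B (P.root j) (P.root k) := by
      have := congrArg (fun x => B x (P.root k)) hsplit
      simp only [map_sum, map_smul, LinearMap.sum_apply, LinearMap.smul_apply,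
        smul_eq_mul] at this
      rw [← this]
    have hsum_nonpos : ∑ j ∈ univ.erase k, e j * B (P.root j) (P.root k) ≤ 0 := by
      refine Finset.sum_nonpos fun j hj => ?_
      by_cases hej : e j = 0
      · rw [hej, zero_mul]
      · have hjs := hes j hej
        have hjk : j ≠ k := Finset.ne_of_mem_erase hj
        have hpjk : P.pairing j k ≤ 0 := simple_pairing_nonpos hP hred hreg hjs hk hjk
        have hpkj : P.pairing k j ≤ 0 := pairing_nonpos_of_pairing_nonpos hpjk
        have hkey := pairing_key (P := P) j k  -- B_jj * pairing k j = 2 B(root j, root k)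
        have hBjj := rootForm_root_pos (P := P) j
        have hBjk : B (P.root j) (P.root k) ≤ 0 := by nlinarith
        have hej0 : 0 ≤ e j := he0 j
        exact mul_nonpos_of_nonneg_of_nonpos hej0 hBjk
    have hBkk := rootForm_root_pos (P := P) k
    nlinarith



-- chunk 5 : conjugation and inversion counts
lemma refl_conj (k j : ι) :
    refl P (P.reflectionPerm k j) = refl P k * refl P j * refl P k := by
  apply LinearEquiv.toLinearMap_injective
  ext x
  show P.reflection (P.reflectionPerm k j) x = P.reflection k (P.reflection j (P.reflection k x))
  rw [P.reflection_apply (P.reflectionPerm k j), LinearMap.congr_fun P.coroot'_reflectionPerm x,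
    P.root_reflectionPerm, LinearMap.comp_apply]
  rw [P.reflection_apply j (P.reflection k x), map_sub, map_smul, P.reflection_same]
  rfl

lemma refl_permL (l : List ι) (j : ι) :
    refl P (permL P l j) = (l.map (refl P)).prod * refl P j * ((l.map (refl P)).prod)⁻¹ := by
  induction l with
  | nil => simp [permL]
  | cons k t ih =>
    have : permL P (k :: t) j = P.reflectionPerm k (permL P t j) := by
      simp [permL, Equiv.Perm.mul_apply]
    rw [this, refl_conj, ih]
    simp only [List.map_cons, List.prod_cons, mul_inv_rev, refl_inv]
    group

lemma f_ne_zero_of_wrd (hreg : Regular P f) {w : V ≃ₗ[ℝ] V} {l : List ι}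
    (hw : (l.map (refl P)).prod = w) (i : ι) : f (w (P.root i)) ≠ 0 := by
  rw [wrd_apply_root hw]
  exact hreg _

variable (P f)

open Classical in
/-- number of inversions of `w` -/
def nInv (w : V ≃ₗ[ℝ] V) : ℕ :=
  (univ.filter fun i => Pos P f i ∧ f (w (P.root i)) < 0).card

variable {P f}

open Classical in
lemma nInv_eq_sum (w : V ≃ₗ[ℝ] V) :
    nInv P f w = ∑ j, if Pos P f j ∧ f (w (P.root j)) < 0 then 1 else 0 := by
  rw [nInv, Finset.card_filter]

lemma nInv_one : nInv P f 1 = 0 := by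
  classical
  rw [nInv, Finset.card_eq_zero, Finset.filter_eq_empty_iff]
  intro i _
  rintro ⟨h1, h2⟩
  change 0 < f (P.root i) at h1
  change f (P.root i) < 0 at h2
  linarith

lemma neg_ne_self (hreg : Regular P f) (k : ι) : neg P k ≠ k := by
  intro h
  have := congrArg (fun j => P.root j) h
  simp only [root_neg] at this
  have h2 := congrArg f this
  rw [map_neg] at h2
  exact hreg k (by linarith)

/-- H2: effect of multiplying by one simple reflection on the inversion count. -/
lemma nInv_step (hP : P.IsCrystallographic) (hred : Reduced P) (hreg : Regular P f)
    {w : V ≃ₗ[ℝ] V} {l : List ι} (hw : Wrd P f w l) {k : ι} (hk : IsSimple P f k) :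
    (0 < f (w (P.root k)) ∧ nInv P f (w * refl P k) = nInv P f w + 1) ∨
    (f (w (P.root k)) < 0 ∧ nInv P f w = nInv P f (w * refl P k) + 1) := by
  classical
  set σ := P.reflectionPerm k with hσ
  have happ : ∀ j, (w * refl P k) (P.root j) = w (P.root (σ j)) := by
    intro j
    rw [mul_apply]
    congr 1
    rw [hσ, P.root_reflectionPerm]
    rfl
  set F : ι → ℕ := fun j => if Pos P f (σ j) ∧ f (w (P.root j)) < 0 then 1 else 0 with hF
  set G : ι → ℕ := fun j => if Pos P f j ∧ f (w (P.root j)) < 0 then 1 else 0 with hG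
  have hreidx : nInv P f (w * refl P k) = ∑ j, F j := by
    rw [nInv_eq_sum]
    refine Fintype.sum_equiv σ _ F fun x => ?_
    simp only [hF, happ, hσ, P.reflectionPerm_self]
  have hGsum : nInv P f w = ∑ j, G j := nInv_eq_sum w
  have hνk : neg P k ≠ k := neg_ne_self hreg k
  have hσk : σ k = neg P k := rfl
  have hσνk : σ (neg P k) = k := by
    rw [hσ, neg]; exact P.reflectionPerm_self k k
  have hoff : ∀ j, j ≠ k → j ≠ neg P k → F j = G j := by
    intro j hj1 hj2
    simp only [hF, hG]
    by_cases hpj : Pos P f j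
    · have h1 : Pos P f (σ j) := simple_perm_pos hP hred hreg hk hpj hj1
      simp [hpj, h1]
    · have h1 : ¬ Pos P f (σ j) := by
        intro hc
        have hσjk : σ j ≠ k := by
          intro hc2
          have h3 := congrArg σ hc2
          rw [hσ, P.reflectionPerm_self] at h3
          exact hj2 h3
        have := simple_perm_pos hP hred hreg hk hc hσjk
        rw [hσ, P.reflectionPerm_self] at this
        exact hpj this
      simp [hpj, h1]
  have hmem : neg P k ∈ univ.erase k := Finset.mem_erase.2 ⟨hνk, mem_univ _⟩
  have hdecomp : ∀ h : ι → ℕ, ∑ j, h j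
      = h k + h (neg P k) + ∑ j ∈ (univ.erase k).erase (neg P k), h j := by
    intro h
    rw [← Finset.add_sum_erase univ h (mem_univ k), ← Finset.add_sum_erase _ h hmem, add_assoc]
  have hrest : ∑ j ∈ (univ.erase k).erase (neg P k), F j
      = ∑ j ∈ (univ.erase k).erase (neg P k), G j := by
    refine Finset.sum_congr rfl fun j hj => ?_
    have hj1 : j ≠ k := Finset.ne_of_mem_erase (Finset.mem_of_mem_erase hj)
    have hj2 : j ≠ neg P k := Finset.ne_of_mem_erase hj
    exact hoff j hj1 hj2
  have hFk : F k = 0 := by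
    have h1 : ¬ Pos P f (σ k) := by
      rw [hσk]
      intro hc
      change 0 < f (P.root (neg P k)) at hc
      rw [root_neg, map_neg] at hc
      have := hk.1
      change 0 < f (P.root k) at this
      linarith
    simp [hF, h1]
  have hGνk : G (neg P k) = 0 := by
    have h1 : ¬ Pos P f (neg P k) := by
      intro hc
      change 0 < f (P.root (neg P k)) at hc
      rw [root_neg, map_neg] at hc
      have := hk.1
      change 0 < f (P.root k) at this
      linarith
    simp [hG, h1]
  have hwνk : f (w (P.root (neg P k))) = - f (w (P.root k)) := by
    rw [root_neg, map_neg, map_neg]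
  rcases lt_or_gt_of_ne (f_ne_zero_of_wrd hreg hw.2 k) with hs | hs
  · -- f (w (root k)) < 0 : right case
    right
    refine ⟨hs, ?_⟩
    have hFνk : F (neg P k) = 0 := by
      have : ¬ f (w (P.root (neg P k))) < 0 := by rw [hwνk]; linarith
      simp [hF, this]
    have hGk : G k = 1 := by
      have hposk : Pos P f k := hk.1
      simp [hG, hposk, hs]
    rw [hreidx, hGsum, hdecomp F, hdecomp G, hFk, hFνk, hGk, hGνk, hrest]
    ring
  · -- 0 < f (w (root k)) : left case
    left
    refine ⟨hs, ?_⟩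
    have hFνk : F (neg P k) = 1 := by
      have h1 : f (w (P.root (neg P k))) < 0 := by rw [hwνk]; linarith
      have h2 : Pos P f (σ (neg P k)) := by rw [hσνk]; exact hk.1
      simp [hF, h1, h2]
    have hGk : G k = 0 := by
      have : ¬ f (w (P.root k)) < 0 := by linarith
      simp [hG, this]
    rw [hreidx, hGsum, hdecomp F, hdecomp G, hFk, hFνk, hGk, hGνk, hrest]
    ring


-- chunk 6 : exchange lemma and length = inversions
lemma exchange (hP : P.IsCrystallographic) (hred : Reduced P) (hreg : Regular P f) :
    ∀ (l : List ι) (w : V ≃ₗ[ℝ] V), Wrd P f w l → ∀ k, IsSimple P f k →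
      f (w (P.root k)) < 0 → len P f (w * refl P k) + 1 ≤ l.length := by
  intro l
  induction l with
  | nil =>
    intro w hw k hk hneg
    rw [← hw.2] at hneg
    simp only [List.map_nil, List.prod_nil] at hneg
    have : 0 < f (P.root k) := hk.1
    change f ((1 : V ≃ₗ[ℝ] V) (P.root k)) < 0 at hneg
    rw [show ((1 : V ≃ₗ[ℝ] V) (P.root k)) = P.root k from rfl] at hneg
    linarith
  | cons t l' ih =>
    intro w hw k hk hneg
    set w' := (l'.map (refl P)).prod with hw'def
    have hw' : Wrd P f w' l' := ⟨fun i hi => hw.1 i (List.mem_cons_of_mem t hi), rfl⟩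
    have ht : IsSimple P f t := hw.1 t List.mem_cons_self
    have hwt : w = refl P t * w' := by
      rw [← hw.2]
      simp only [List.map_cons, List.prod_cons]
      rfl
    rcases lt_or_gt_of_ne (f_ne_zero_of_wrd hreg hw'.2 k) with hneg' | hpos'
    · have hIH := ih w' hw' k hk hneg'
      have h1 : InW P f (w' * refl P k) := InW.mul ⟨l', hw'⟩ ⟨[k], Wrd.singleton hk⟩
      have h2 : len P f (w * refl P k) ≤ len P f (refl P t) + len P f (w' * refl P k) := by
        have : w * refl P k = refl P t * (w' * refl P k) := by rw [hwt, mul_assoc]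
        rw [this]
        exact len_mul_le ⟨[t], Wrd.singleton ht⟩ h1
      have h3 : len P f (refl P t) ≤ 1 := by
        simpa using len_le_of_wrd (Wrd.singleton ht)
      simp only [List.length_cons]
      omega
    · -- w' (root k) is a positive root; it must be root t
      set j' := permL P l' k with hj'def
      have hroot : w' (P.root k) = P.root j' := wrd_apply_root hw'.2 k
      have hposj' : Pos P f j' := by
        show 0 < f (P.root j')
        rw [← hroot]
        exact hpos'
      have hwk : w (P.root k) = refl P t (w' (P.root k)) := by
        rw [hwt]; rfl
      have hj't : j' = t := by
        by_contra hne
        have hpp := simple_perm_pos hP hred hreg ht hposj' hne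
        change 0 < f (P.root (P.reflectionPerm t j')) at hpp
        rw [P.root_reflectionPerm] at hpp
        rw [hwk, hroot] at hneg
        have heq : P.reflection t (P.root j') = refl P t (P.root j') := rfl
        rw [heq] at hpp
        linarith
      have hconj : refl P t = w' * refl P k * w'⁻¹ := by
        rw [← hj't, hj'def, refl_permL]
      have hcollapse : w * refl P k = w' := by
        rw [hwt, hconj]
        simp only [mul_assoc]
        rw [inv_mul_cancel_left, refl_mul_refl, mul_one]
      rw [hcollapse]
      have : len P f w' ≤ l'.length := len_le_of_wrd hw'
      simp only [List.length_cons]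
      omega


lemma len_eq_nInv (hP : P.IsCrystallographic) (hred : Reduced P) (hreg : Regular P f)
    {w : V ≃ₗ[ℝ] V} (hw : InW P f w) : len P f w = nInv P f w := by
  suffices h : ∀ (n : ℕ) (w : V ≃ₗ[ℝ] V), InW P f w → len P f w = n → len P f w = nInv P f w from
    h _ w hw rfl
  intro n
  induction n using Nat.strong_induction_on with
  | _ n IH =>
    intro w hw hlen
    obtain ⟨l, hl, hll⟩ := exists_reduced_word hw
    by_cases hnil : l = []
    · subst hnil
      rw [← hl.2]
      simp only [List.map_nil, List.prod_nil]
      rw [len_one, nInv_one]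
    · set l' := l.dropLast with hl'def
      set k := l.getLast hnil with hkdef
      have hsplit : l = l' ++ [k] := (List.dropLast_append_getLast hnil).symm
      set w' := (l'.map (refl P)).prod with hw'def
      have hw' : Wrd P f w' l' :=
        ⟨fun i hi => hl.1 i (by rw [hsplit]; exact List.mem_append_left _ hi), rfl⟩
      have hk : IsSimple P f k := hl.1 k (by rw [hsplit]; exact List.mem_append_right _ (by simp))
      have hwk : w = w' * refl P k := by
        rw [← hl.2, hsplit]
        simp only [List.map_append, List.prod_append, List.map_cons, List.map_nil,
          List.prod_cons, List.prod_nil, mul_one]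
        rfl
      have hlength : l.length = l'.length + 1 := by
        rw [hsplit]; simp
      have hup : len P f w' ≤ l'.length := len_le_of_wrd hw'
      have hlow : len P f w ≤ len P f w' + 1 := by
        rw [hwk]
        have h1 := len_mul_le (P := P) (f := f) ⟨l', hw'⟩ ⟨[k], Wrd.singleton hk⟩
        have h2 : len P f (refl P k) ≤ 1 := by simpa using len_le_of_wrd (Wrd.singleton hk)
        omega
      have hlw' : len P f w' + 1 = len P f w := by omega
      rcases lt_or_gt_of_ne (f_ne_zero_of_wrd hreg hw'.2 k) with hneg | hpos
      · exfalso
        obtain ⟨m, hm, hmm⟩ := exists_reduced_word (⟨l', hw'⟩ : InW P f w')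
        have := exchange hP hred hreg m w' hm k hk hneg
        rw [hmm, ← hwk] at this
        omega
      · rcases nInv_step hP hred hreg hw' hk with ⟨_, hstep⟩ | ⟨hbad, _⟩
        · have hIH : len P f w' = nInv P f w' := by
            refine IH (len P f w') (by omega) w' ⟨l', hw'⟩ rfl
          rw [← hwk] at hstep
          omega
        · linarith


-- chunk 7 : the longest element inverts all positive roots
lemma w0_neg_simple (hP : P.IsCrystallographic) (hred : Reduced P) (hreg : Regular P f)
    {w₀ : V ≃ₗ[ℝ] V} (hw₀ : InW P f w₀)
    (hmax : ∀ w : V ≃ₗ[ℝ] V, InW P f w → len P f w ≤ len P f w₀)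
    {k : ι} (hk : IsSimple P f k) : f (w₀ (P.root k)) < 0 := by
  obtain ⟨l₀, hl₀⟩ := hw₀
  rcases lt_or_gt_of_ne (f_ne_zero_of_wrd hreg hl₀.2 k) with h | h
  · exact h
  · exfalso
    rcases nInv_step hP hred hreg hl₀ hk with ⟨_, hstep⟩ | ⟨hbad, _⟩
    · have h1 : InW P f (w₀ * refl P k) := InW.mul ⟨l₀, hl₀⟩ ⟨[k], Wrd.singleton hk⟩
      have h2 : len P f (w₀ * refl P k) = nInv P f (w₀ * refl P k) := len_eq_nInv hP hred hreg h1
      have h3 : len P f w₀ = nInv P f w₀ := len_eq_nInv hP hred hreg ⟨l₀, hl₀⟩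
      have h4 := hmax (w₀ * refl P k) h1
      omega
    · linarith

lemma w0_neg_pos (hP : P.IsCrystallographic) (hred : Reduced P) (hreg : Regular P f)
    {w₀ : V ≃ₗ[ℝ] V} (hw₀ : InW P f w₀)
    (hmax : ∀ w : V ≃ₗ[ℝ] V, InW P f w → len P f w ≤ len P f w₀)
    {i : ι} (hi : Pos P f i) : f (w₀ (P.root i)) < 0 := by
  obtain ⟨c, hc0, hcs, hce⟩ := nonneg_comb (P := P) (f := f) hi
  obtain ⟨l₀, hl₀⟩ := hw₀
  have hne : f (w₀ (P.root i)) ≠ 0 := f_ne_zero_of_wrd hreg hl₀.2 i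
  have hle : f (w₀ (P.root i)) ≤ 0 := by
    rw [hce, map_sum, map_sum]
    refine Finset.sum_nonpos fun j _ => ?_
    rw [map_smul, map_smul, smul_eq_mul]
    by_cases hcj : c j = 0
    · rw [hcj, zero_mul]
    · have hjs := hcs j hcj
      have := w0_neg_simple hP hred hreg ⟨l₀, hl₀⟩ hmax hjs
      exact mul_nonpos_of_nonneg_of_nonpos (hc0 j) (le_of_lt this)
  exact lt_of_le_of_ne hle hne

lemma w0_pos_iff (hP : P.IsCrystallographic) (hred : Reduced P) (hreg : Regular P f)
    {w₀ : V ≃ₗ[ℝ] V} (hw₀ : InW P f w₀)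
    (hmax : ∀ w : V ≃ₗ[ℝ] V, InW P f w → len P f w ≤ len P f w₀)
    (i : ι) : f (w₀ (P.root i)) < 0 ↔ Pos P f i := by
  constructor
  · intro h
    by_contra hcon
    have hlt : f (P.root i) < 0 := lt_of_le_of_ne (not_lt.1 hcon) (hreg i)
    have hnegpos : Pos P f (neg P i) := by
      show 0 < f (P.root (neg P i))
      rw [root_neg, map_neg]
      linarith
    have := w0_neg_pos hP hred hreg hw₀ hmax hnegpos
    rw [root_neg, map_neg, map_neg] at this
    linarith
  · exact fun h => w0_neg_pos hP hred hreg hw₀ hmax h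

open Classical in
lemma nInv_w0 (hP : P.IsCrystallographic) (hred : Reduced P) (hreg : Regular P f)
    {w₀ : V ≃ₗ[ℝ] V} (hw₀ : InW P f w₀)
    (hmax : ∀ w : V ≃ₗ[ℝ] V, InW P f w → len P f w ≤ len P f w₀) :
    nInv P f w₀ = (univ.filter (Pos P f)).card := by
  rw [nInv]
  congr 1
  refine Finset.filter_congr fun i _ => ?_
  have := w0_pos_iff hP hred hreg hw₀ hmax i
  constructor
  · rintro ⟨h1, _⟩; exact h1
  · intro h1; exact ⟨h1, this.2 h1⟩

open Classical in
/-- the key complement formula : `ℓ(u⁻¹ w₀) + ℓ(u) = ℓ(w₀)` -/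
lemma len_compl (hP : P.IsCrystallographic) (hred : Reduced P) (hreg : Regular P f)
    {w₀ : V ≃ₗ[ℝ] V} (hw₀ : InW P f w₀)
    (hmax : ∀ w : V ≃ₗ[ℝ] V, InW P f w → len P f w ≤ len P f w₀)
    {u : V ≃ₗ[ℝ] V} (hu : InW P f u) :
    len P f (u⁻¹ * w₀) + len P f u = len P f w₀ := by
  obtain ⟨l₀, hl₀⟩ := hw₀
  obtain ⟨m, hminv⟩ := hu.inv
  set π := permL P l₀ with hπdef
  have hπ : ∀ i, w₀ (P.root i) = P.root (π i) := fun i => wrd_apply_root hl₀.2 i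
  set φ : ι → ι := fun i => neg P (π i) with hφdef
  set ψ : ι → ι := fun j => π.symm (neg P j) with hψdef
  have hφψ : ∀ i, ψ (φ i) = i := by
    intro i
    simp only [hφdef, hψdef, neg_neg', Equiv.symm_apply_apply]
  have hψφ : ∀ j, φ (ψ j) = j := by
    intro j
    simp only [hφdef, hψdef, Equiv.apply_symm_apply, neg_neg']
  have hrootφ : ∀ i, P.root (φ i) = - w₀ (P.root i) := by
    intro i
    rw [hφdef]
    simp only [root_neg, hπ]
  set T : Finset ι := univ.filter (Pos P f) with hT
  set A : Finset ι := univ.filter (fun i => Pos P f i ∧ f ((u⁻¹ * w₀) (P.root i)) < 0) with hA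
  set Bs : Finset ι := univ.filter (fun i => Pos P f i ∧ f (u⁻¹ (P.root i)) < 0) with hBs
  have huinv_ne : ∀ j, f (u⁻¹ (P.root j)) ≠ 0 := fun j => f_ne_zero_of_wrd hreg hminv.2 j
  have happly : ∀ i, (u⁻¹ * w₀) (P.root i) = u⁻¹ (w₀ (P.root i)) := fun i => rfl
  have hcard : A.card = (T \ Bs).card := by
    refine Finset.card_nbij' φ ψ ?_ ?_ ?_ ?_
    · intro i hi
      rw [Finset.mem_coe, hA, Finset.mem_filter] at hi
      obtain ⟨_, hipos, hicond⟩ := hi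
      have hw0neg : f (w₀ (P.root i)) < 0 := w0_neg_pos hP hred hreg ⟨l₀, hl₀⟩ hmax hipos
      rw [Finset.mem_coe, Finset.mem_sdiff]
      constructor
      · rw [hT, Finset.mem_filter]
        refine ⟨mem_univ _, ?_⟩
        show 0 < f (P.root (φ i))
        rw [hrootφ, map_neg]
        linarith
      · rw [hBs, Finset.mem_filter]
        rintro ⟨_, _, hcon⟩
        rw [hrootφ, map_neg, map_neg] at hcon
        rw [happly] at hicond
        linarith
    · intro j hj
      rw [Finset.mem_coe, Finset.mem_sdiff, hT, Finset.mem_filter, hBs, Finset.mem_filter] at hj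
      obtain ⟨⟨_, hjpos⟩, hjnB⟩ := hj
      have hju : 0 < f (u⁻¹ (P.root j)) := by
        rcases lt_or_gt_of_ne (huinv_ne j) with h | h
        · exact absurd ⟨mem_univ _, hjpos, h⟩ hjnB
        · exact h
      have hπψ : π (ψ j) = neg P j := by
        rw [hψdef]
        exact π.apply_symm_apply _
      have hw0ψ : w₀ (P.root (ψ j)) = - P.root j := by
        rw [hπ, hπψ, root_neg]
      have hψpos : Pos P f (ψ j) := by
        rw [← w0_pos_iff hP hred hreg ⟨l₀, hl₀⟩ hmax, hw0ψ, map_neg]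
        have : 0 < f (P.root j) := hjpos
        linarith
      rw [Finset.mem_coe, hA, Finset.mem_filter]
      refine ⟨mem_univ _, hψpos, ?_⟩
      rw [happly, hw0ψ, map_neg, map_neg]
      linarith
    · intro i _; exact hφψ i
    · intro j _; exact hψφ j
  have hBsT : Bs ⊆ T := by
    intro i hi
    rw [hBs, Finset.mem_filter] at hi
    rw [hT, Finset.mem_filter]
    exact ⟨mem_univ _, hi.2.1⟩
  have hcard2 : (T \ Bs).card = T.card - Bs.card := Finset.card_sdiff_of_subset hBsT
  have hBsle : Bs.card ≤ T.card := Finset.card_le_card hBsT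
  have h1 : nInv P f (u⁻¹ * w₀) = A.card := rfl
  have h2 : nInv P f u⁻¹ = Bs.card := rfl
  have h3 : len P f (u⁻¹ * w₀) = nInv P f (u⁻¹ * w₀) :=
    len_eq_nInv hP hred hreg (hu.inv.mul ⟨l₀, hl₀⟩)
  have h4 : len P f u⁻¹ = nInv P f u⁻¹ := len_eq_nInv hP hred hreg hu.inv
  have h5 : len P f w₀ = nInv P f w₀ := len_eq_nInv hP hred hreg ⟨l₀, hl₀⟩
  have h6 : nInv P f w₀ = T.card := nInv_w0 hP hred hreg ⟨l₀, hl₀⟩ hmax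
  have h7 : len P f u⁻¹ = len P f u := len_inv hu
  omega


-- chunk 8 : paths in the quantum Bruhat graph
lemma down_step_len (hreg : Regular P f) {w : V ≃ₗ[ℝ] V} {k : ι}
    (h : DownStep P f w k) : len P f (w * refl P k) + 1 ≤ len P f w := by
  obtain ⟨hpos, heq⟩ := h
  have h2 := tworho_ge_two (P := P) hreg hpos
  have : (len P f (w * refl P k) : ℝ) + 1 ≤ (len P f w : ℝ) := by linarith
  exact_mod_cast this

lemma step_len_le (hreg : Regular P f) {w : V ≃ₗ[ℝ] V} {k : ι}
    (h : Step P f w k) : len P f (w * refl P k) ≤ len P f w + 1 := by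
  rcases h with h | h
  · rw [h.2]
  · have := down_step_len hreg h
    omega

lemma pathEnd_cons (w : V ≃ₗ[ℝ] V) (k : ι) (ks : List ι) :
    pathEnd P w (k :: ks) = pathEnd P (w * refl P k) ks := by
  rw [pathEnd, pathEnd]
  simp only [List.map_cons, List.prod_cons, mul_assoc]

lemma pathEnd_nil (w : V ≃ₗ[ℝ] V) : pathEnd P w [] = w := by
  rw [pathEnd]
  simp

lemma valid_path_len (hreg : Regular P f) :
    ∀ (ks : List ι) (w : V ≃ₗ[ℝ] V), ValidPath P f w ks →
      len P f (pathEnd P w ks) ≤ len P f w + ks.length := by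
  intro ks
  induction ks with
  | nil => intro w _; rw [pathEnd_nil]; simp
  | cons k ks ih =>
    intro w hv
    obtain ⟨hstep, hrest⟩ := hv
    have h1 := ih (w * refl P k) hrest
    have h2 := step_len_le hreg hstep
    rw [pathEnd_cons]
    simp only [List.length_cons]
    omega

lemma valid_path_up (hreg : Regular P f) {W₀ : V ≃ₗ[ℝ] V} :
    ∀ (ks : List ι) (w : V ≃ₗ[ℝ] V), ValidPath P f w ks → pathEnd P w ks = W₀ →
      len P f w + ks.length ≤ len P f W₀ → UpPath P f w ks := by
  intro ks
  induction ks with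
  | nil => intro w _ _ _; trivial
  | cons k ks ih =>
    intro w hv hend hbud
    obtain ⟨hstep, hrest⟩ := hv
    rw [pathEnd_cons] at hend
    rcases hstep with hup | hdown
    · refine ⟨hup, ih (w * refl P k) hrest hend ?_⟩
      have h1 := hup.2
      simp only [List.length_cons] at hbud
      omega
    · exfalso
      have h1 := down_step_len hreg hdown
      have h2 := valid_path_len hreg ks (w * refl P k) hrest
      rw [hend] at h2
      simp only [List.length_cons] at hbud
      omega

lemma up_path_valid : ∀ (ks : List ι) (w : V ≃ₗ[ℝ] V), UpPath P f w ks → ValidPath P f w ks := by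
  intro ks
  induction ks with
  | nil => intro w _; trivial
  | cons k ks ih =>
    intro w hv
    obtain ⟨hup, hrest⟩ := hv
    exact ⟨Or.inl hup, ih _ hrest⟩

lemma build_up (hP : P.IsCrystallographic) (hred : Reduced P) (hreg : Regular P f) :
    ∀ (m : List ι) (w : V ≃ₗ[ℝ] V), InW P f w → (∀ i ∈ m, IsSimple P f i) →
      len P f (w * (m.map (refl P)).prod) = len P f w + m.length → UpPath P f w m := by
  intro m
  induction m with
  | nil => intro w _ _ _; trivial
  | cons k m' ih =>
    intro w hw hsimp hadd
    have hk : IsSimple P f k := hsimp k List.mem_cons_self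
    have hassoc : w * ((k :: m').map (refl P)).prod = (w * refl P k) * (m'.map (refl P)).prod := by
      simp only [List.map_cons, List.prod_cons, mul_assoc]
    have hwk : InW P f (w * refl P k) := hw.mul ⟨[k], Wrd.singleton hk⟩
    have hm' : InW P f ((m'.map (refl P)).prod) :=
      ⟨m', ⟨fun i hi => hsimp i (List.mem_cons_of_mem k hi), rfl⟩⟩
    have hub : len P f (w * refl P k) ≤ len P f w + 1 := by
      have h1 := len_mul_le (P := P) (f := f) hw ⟨[k], Wrd.singleton hk⟩
      have h2 : len P f (refl P k) ≤ 1 := by simpa using len_le_of_wrd (Wrd.singleton hk)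
      omega
    have hlb : len P f w + 1 ≤ len P f (w * refl P k) := by
      have h1 : len P f (w * ((k :: m').map (refl P)).prod)
          ≤ len P f (w * refl P k) + m'.length := by
        rw [hassoc]
        have := len_mul_le (P := P) (f := f) hwk hm'
        have h2 : len P f ((m'.map (refl P)).prod) ≤ m'.length := by
          obtain ⟨m'', hm''⟩ := hm'
          exact len_le_of_wrd ⟨fun i hi => hsimp i (List.mem_cons_of_mem k hi), rfl⟩
        omega
      rw [hadd] at h1
      simp only [List.length_cons] at h1
      omega
    have hstep : len P f (w * refl P k) = len P f w + 1 := le_antisymm hub hlb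
    refine ⟨⟨hk.1, hstep⟩, ?_⟩
    refine ih (w * refl P k) hwk (fun i hi => hsimp i (List.mem_cons_of_mem k hi)) ?_
    rw [← hassoc, hadd, hstep]
    simp only [List.length_cons]
    omega

lemma exists_up_path (hP : P.IsCrystallographic) (hred : Reduced P) (hreg : Regular P f)
    {w₀ : V ≃ₗ[ℝ] V} (hw₀ : InW P f w₀)
    (hmax : ∀ w : V ≃ₗ[ℝ] V, InW P f w → len P f w ≤ len P f w₀)
    {u : V ≃ₗ[ℝ] V} (hu : InW P f u) :
    ∃ ks, UpPath P f u ks ∧ pathEnd P u ks = w₀ ∧ ks.length + len P f u = len P f w₀ := by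
  set v := u⁻¹ * w₀ with hvdef
  have hv : InW P f v := hu.inv.mul hw₀
  have hcompl : len P f v + len P f u = len P f w₀ := len_compl hP hred hreg hw₀ hmax hu
  obtain ⟨m, hm, hml⟩ := exists_reduced_word hv
  have hprod : (m.map (refl P)).prod = v := hm.2
  have hend : pathEnd P u m = w₀ := by
    rw [pathEnd, hprod, hvdef, mul_inv_cancel_left]
  have hadd : len P f (u * (m.map (refl P)).prod) = len P f u + m.length := by
    rw [hprod, hvdef, mul_inv_cancel_left, ← hcompl, hml]
    omega
  exact ⟨m, build_up hP hred hreg m u hu hm.1 hadd, hend, by omega⟩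

end Aux

/-- any minimal directed path in the quantum Bruhat graph ending at
the longest element `w₀` uses only upward edges; consequently
`d_Γ(u, w₀) = ℓ(w₀) - ℓ(u)`. -/
theorem dist_to_longest (hP : P.IsCrystallographic) (hred : Reduced P) (hreg : Regular P f) (w₀ : V ≃ₗ[ℝ] V) (hw₀ : InW P f w₀)
    (hmax : ∀ w : V ≃ₗ[ℝ] V, InW P f w → len P f w ≤ len P f w₀)
    (u : V ≃ₗ[ℝ] V) (hu : InW P f u) :
    (∀ ks : List ι, ValidPath P f u ks → pathEnd P u ks = w₀ →
        ks.length = dist P f u w₀ → UpPath P f u ks) ∧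
      dist P f u w₀ + len P f u = len P f w₀ := by
  obtain ⟨ks₀, hup₀, hend₀, hlen₀⟩ := exists_up_path hP hred hreg hw₀ hmax hu
  have hmem : ks₀.length ∈ {n | ∃ ks, ValidPath P f u ks ∧ pathEnd P u ks = w₀ ∧ ks.length = n} :=
    ⟨ks₀, up_path_valid ks₀ u hup₀, hend₀, rfl⟩
  have hdist_le : dist P f u w₀ ≤ ks₀.length := Nat.sInf_le hmem
  have hdist_mem : dist P f u w₀ ∈
      {n | ∃ ks, ValidPath P f u ks ∧ pathEnd P u ks = w₀ ∧ ks.length = n} :=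
    Nat.sInf_mem ⟨ks₀.length, hmem⟩
  have hlb : len P f w₀ ≤ len P f u + dist P f u w₀ := by
    obtain ⟨ks, hv, hend, hl⟩ := hdist_mem
    have := valid_path_len hreg ks u hv
    rw [hend] at this
    omega
  have hequ : dist P f u w₀ + len P f u = len P f w₀ := by omega
  refine ⟨?_, hequ⟩
  intro ks hv hend hlen
  refine valid_path_up hreg ks u hv hend ?_
  rw [hlen]
  omega

end QBG
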